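/- Let α ∈ (0,σ_c/2), m ∈ (0,z_α) with (1-m)f(m) > 2α, under assumptions (f1)–(f5). Then the solution y of y'' = ((1-y)/4)[(2α)²f'(y)/((1-y)f(y)³) - 1], y(0)=m, y'(0)=0, is periodic: there exists t₂ > 0 such that y is strictly increasing on (0,t₂), attains a maximum M ∈ (z_α,1) at t₂, and y(t+2t₂) = y(t) for all t. -/

import Mathlib

open Set Filter

private lemma uniq_abs (G : ℝ → ℝ) (K : NNReal) (S : Set ℝ)
    (hG : LipschitzOnWith K G S)
    (Y Z Y' Z' : ℝ → ℝ)
    (hY : ∀ t, HasDerivAt Y (Y' t) t) (hY' : ∀ t, HasDerivAt Y' (G (Y t)) t)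
    (hZ : ∀ t, HasDerivAt Z (Z' t) t) (hZ' : ∀ t, HasDerivAt Z' (G (Z t)) t)
    (hYS : ∀ t, Y t ∈ S) (hZS : ∀ t, Z t ∈ S)
    (t₀ : ℝ) (h1 : Y t₀ = Z t₀) (h2 : Y' t₀ = Z' t₀) :
    ∀ t, Y t = Z t := by
  set v : ℝ → ℝ × ℝ → ℝ × ℝ := fun _ p => (p.2, G p.1) with hv_def
  have hv : ∀ t, LipschitzOnWith (max 1 K) (v t) (S ×ˢ (univ : Set ℝ)) := by
    intro t
    apply LipschitzOnWith.of_dist_le_mul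
    intro p hp q hq
    rw [Prod.dist_eq]
    rw [Prod.dist_eq]
    have h1' : dist p.2 q.2 ≤ ↑(max 1 K) * max (dist p.1 q.1) (dist p.2 q.2) := by
      calc dist p.2 q.2 ≤ max (dist p.1 q.1) (dist p.2 q.2) := le_max_right _ _
        _ = 1 * max (dist p.1 q.1) (dist p.2 q.2) := (one_mul _).symm
        _ ≤ ↑(max 1 K) * max (dist p.1 q.1) (dist p.2 q.2) := by
            apply mul_le_mul_of_nonneg_right _ (le_max_of_le_left dist_nonneg)
            simp [NNReal.coe_max]
    have h2' : dist (G p.1) (G q.1) ≤ ↑(max 1 K) * max (dist p.1 q.1) (dist p.2 q.2) := by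
      calc dist (G p.1) (G q.1) ≤ ↑K * dist p.1 q.1 :=
            hG.dist_le_mul p.1 hp.1 q.1 hq.1
        _ ≤ ↑(max 1 K) * max (dist p.1 q.1) (dist p.2 q.2) := by
            refine mul_le_mul (by simp [NNReal.coe_max]) (le_max_left _ _) dist_nonneg ?_
            exact NNReal.coe_nonneg _
    exact max_le h1' h2'
  have key : ∀ t : ℝ, (fun τ => (Y τ, Y' τ)) t = (fun τ => (Z τ, Z' τ)) t := by
    intro t
    have htIoo : t₀ ∈ Ioo (min t t₀ - 1) (max t t₀ + 1) := by
      constructor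
      · have := min_le_right t t₀; linarith
      · have := le_max_right t t₀; linarith
    have htIcc : t ∈ Icc (min t t₀ - 1) (max t t₀ + 1) := by
      constructor
      · have := min_le_left t t₀; linarith
      · have := le_max_left t t₀; linarith
    refine ODE_solution_unique_of_mem_Icc (f := fun τ => (Y τ, Y' τ)) (g := fun τ => (Z τ, Z' τ)) (fun t _ => hv t) htIoo ?_ ?_ ?_ ?_ ?_ ?_ ?_ htIcc
    · exact fun τ _ => (((hY τ).prodMk (hY' τ)).continuousAt).continuousWithinAt
    · exact fun τ _ => (hY τ).prodMk (hY' τ)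
    · exact fun τ _ => ⟨hYS τ, mem_univ _⟩
    · exact fun τ _ => (((hZ τ).prodMk (hZ' τ)).continuousAt).continuousWithinAt
    · exact fun τ _ => (hZ τ).prodMk (hZ' τ)
    · exact fun τ _ => ⟨hZS τ, mem_univ _⟩
    · simp [h1, h2]
  intro t
  exact congrArg Prod.fst (key t)


private lemma inv_abs (g Φ : ℝ → ℝ) (m M : ℝ) (hm0 : 0 < m) (hmM : m ≤ M) (hM1 : M < 1)
    (hΦ : ∀ s ∈ Ioo (0:ℝ) 1, HasDerivAt Φ (2 * g s) s)
    (hout : ∀ s ∈ Ioo (0:ℝ) 1, Φ m ≤ Φ s → s ∈ Icc m M)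
    (Y Y' : ℝ → ℝ) (hY : ∀ t, HasDerivAt Y (Y' t) t)
    (hY' : ∀ t, Y t ∈ Ioo (0:ℝ) 1 → HasDerivAt Y' (g (Y t)) t)
    (hY0 : Y 0 = m) (hY'0 : Y' 0 = 0) :
    ∀ t, 0 ≤ t → Y t ∈ Icc m M := by
  have hsub : Icc m M ⊆ Ioo (0:ℝ) 1 := fun s hs => ⟨lt_of_lt_of_le hm0 hs.1, lt_of_le_of_lt hs.2 hM1⟩
  by_contra hcon
  push_neg at hcon
  obtain ⟨b₀, hb₀0, hb₀⟩ := hcon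
  set B : Set ℝ := {t | 0 ≤ t ∧ Y t ∉ Icc m M} with hB_def
  have hne : B.Nonempty := ⟨b₀, hb₀0, hb₀⟩
  have hbdd : BddBelow B := ⟨0, fun t ht => ht.1⟩
  set c : ℝ := sInf B with hc_def
  have hc0 : 0 ≤ c := le_csInf hne (fun t ht => ht.1)
  have good : ∀ τ, 0 ≤ τ → τ < c → Y τ ∈ Icc m M := by
    intro τ hτ0 hτc
    by_contra hbad
    exact absurd (csInf_le hbdd ⟨hτ0, hbad⟩) (not_le.mpr hτc)
  have hYc : Y c ∈ Icc m M := by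
    rcases eq_or_lt_of_le hc0 with h | h
    · rw [← h, hY0]; exact ⟨le_refl m, hmM⟩
    · have hclosed : IsClosed (Y ⁻¹' Icc m M) :=
        isClosed_Icc.preimage (continuous_iff_continuousAt.mpr fun t => (hY t).continuousAt)
      have hsub2 : Ico 0 c ⊆ Y ⁻¹' Icc m M := fun τ hτ => good τ hτ.1 hτ.2
      have hsub3 : closure (Ico 0 c) ⊆ Y ⁻¹' Icc m M :=
        (closure_mono hsub2).trans hclosed.closure_eq.subset
      apply hsub3
      rw [closure_Ico (ne_of_lt h)]
      exact ⟨hc0, le_refl c⟩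
  -- find ε > 0 with Y τ ∈ Ioo 0 1 on [c, c+ε]
  have hU : IsOpen (Y ⁻¹' Ioo (0:ℝ) 1) :=
    isOpen_Ioo.preimage (continuous_iff_continuousAt.mpr fun t => (hY t).continuousAt)
  have hcU : c ∈ Y ⁻¹' Ioo (0:ℝ) 1 := hsub hYc
  obtain ⟨δ, hδ0, hball⟩ := Metric.isOpen_iff.mp hU c hcU
  set ε : ℝ := δ / 2 with hε_def
  have hε0 : 0 < ε := by positivity
  have hin : ∀ τ ∈ Icc 0 (c + ε), Y τ ∈ Ioo (0:ℝ) 1 := by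
    intro τ hτ
    rcases le_or_gt τ c with h | h
    · rcases eq_or_lt_of_le h with h' | h'
      · rw [h']; exact hsub hYc
      · exact hsub (good τ hτ.1 h')
    · apply hball
      rw [Metric.mem_ball, Real.dist_eq, abs_of_pos (by linarith)]
      have := hτ.2
      rw [hε_def] at *
      linarith
  set E : ℝ → ℝ := fun t => Y' t ^ 2 - Φ (Y t) with hE_def
  have hEderiv : ∀ τ ∈ Icc 0 (c + ε), HasDerivAt E 0 τ := by
    intro τ hτ
    have h1 : HasDerivAt (fun t => Y' t ^ 2) (2 * Y' τ ^ 1 * g (Y τ)) τ :=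
      (hY' τ (hin τ hτ)).pow 2
    have h2 : HasDerivAt (fun t => Φ (Y t)) (2 * g (Y τ) * Y' τ) τ :=
      (hΦ (Y τ) (hin τ hτ)).comp τ (hY τ)
    have := h1.sub h2
    refine this.congr_deriv ?_
    ring
  have hEcont : ContinuousOn E (Icc 0 (c + ε)) :=
    fun τ hτ => (hEderiv τ hτ).continuousAt.continuousWithinAt
  have hEconst : ∀ τ ∈ Icc 0 (c + ε), E τ = E 0 :=
    constant_of_has_deriv_right_zero hEcont
      (fun τ hτ => ((hEderiv τ (Ico_subset_Icc_self hτ)).hasDerivWithinAt))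
  have hE0 : E 0 = -Φ m := by simp [hE_def, hY0, hY'0]
  have hgood2 : ∀ τ ∈ Icc 0 (c + ε), Y τ ∈ Icc m M := by
    intro τ hτ
    have h1 := hEconst τ hτ
    rw [hE0, hE_def] at h1
    simp only at h1
    have hΦY : Φ m ≤ Φ (Y τ) := by nlinarith [sq_nonneg (Y' τ)]
    exact hout (Y τ) (hin τ hτ) hΦY
  have : c < c + ε := by linarith
  rw [hc_def] at this
  obtain ⟨b, hbB, hbc⟩ := (csInf_lt_iff hbdd hne).mp this
  exact hbB.2 (hgood2 b ⟨hbB.1, le_of_lt hbc⟩)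

set_option maxHeartbeats 1600000 in
/-- Case (iii) of the ODE analysis: if `(1-m)f(m) > 2α` with `m ∈ (0, z_α)`, the solution of
`y'' = ((1-y)/4)[(2α)²f'(y)/((1-y)f(y)³) - 1]`, `y(0)=m`, `y'(0)=0` is periodic: there is
`t₂ > 0` such that `y` is strictly increasing on `[0,t₂]`, attains its maximum
`M ∈ (z_α, 1)` at `t₂`, and `y(t + 2t₂) = y(t)` for all `t`. -/
theorem stmt7 (f f' f'' : ℝ → ℝ) (σc α m z : ℝ) (hσ : 0 < σc)
    (hf_nonneg : ∀ s ∈ Ico (0:ℝ) 1, 0 ≤ f s)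
    (hf_zero : ∀ s ∈ Ico (0:ℝ) 1, (f s = 0 ↔ s = 0))
    (hc0 : ContinuousOn f (Ico 0 1))
    (hd1 : ∀ s ∈ Ioo (0:ℝ) 1, HasDerivAt f (f' s) s)
    (hd2 : ∀ s ∈ Ioo (0:ℝ) 1, HasDerivAt f' (f'' s) s)
    (hc2 : ContinuousOn f'' (Ioo 0 1))
    (hf3 : ∀ s ∈ Ioo (0:ℝ) 1, 0 < (1 - s) * f' s - f s)
    (hf2 : Tendsto (fun s => (1 - s) * f s) (nhdsWithin 1 (Iio 1)) (nhds σc))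
    (hf4 : ∀ s ∈ Ioo (0:ℝ) 1, deriv (fun t => (1 - t) * f' t / f t) s < 0)
    (hf5 : Tendsto (fun s => ((1 - s) * f' s - f s) / (1 - s) ^ 3)
      (nhdsWithin 1 (Iio 1)) atTop)
    (hα : α ∈ Ioo (0:ℝ) (σc / 2))
    (hz : z ∈ Ioo (0:ℝ) 1)
    (hzdef : f' z / ((1 - z) * (f z) ^ 3) = 1 / (2 * α) ^ 2)
    (hm : m ∈ Ioo (0:ℝ) z)
    (hcase : 2 * α < (1 - m) * f m)
    (y y' : ℝ → ℝ)
    (hy : ∀ t : ℝ, HasDerivAt y (y' t) t)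
    (hy' : ∀ t : ℝ, HasDerivAt y'
      (if y t < 1 then
        (1 - y t) / 4 * ((2 * α) ^ 2 * f' (y t) / ((1 - y t) * (f (y t)) ^ 3) - 1)
      else 0) t)
    (hy0 : y 0 = m) (hy'0 : y' 0 = 0) :
    ∃ t₂ : ℝ, 0 < t₂ ∧ ∃ M ∈ Ioo z 1,
      StrictMonoOn y (Icc 0 t₂) ∧ y t₂ = M ∧ (∀ t : ℝ, y t ≤ M) ∧
      ∀ t : ℝ, y (t + 2 * t₂) = y t := by
  have hα0 : 0 < α := hα.1
  have h2α : 0 < 2 * α := by linarith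
  have hz0 : 0 < z := hz.1
  have hz1 : z < 1 := hz.2
  have hm0 : 0 < m := hm.1
  have hmz : m < z := hm.2
  have hm1 : m < 1 := hmz.trans hz1
  have fpos : ∀ s ∈ Ioo (0:ℝ) 1, 0 < f s := by
    intro s hs
    have h1 := hf_nonneg s ⟨hs.1.le, hs.2⟩
    have h2 := hf_zero s ⟨hs.1.le, hs.2⟩
    rcases eq_or_lt_of_le h1 with h | h
    · exact absurd (h2.mp h.symm) (ne_of_gt hs.1)
    · exact h
  have fne : ∀ s ∈ Ioo (0:ℝ) 1, f s ≠ 0 := fun s hs => ne_of_gt (fpos s hs)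
  have one_sub_ne : ∀ s ∈ Ioo (0:ℝ) 1, (1:ℝ) - s ≠ 0 := fun s hs => by
    have := hs.2; intro h; linarith
  have fcont : ∀ s ∈ Ioo (0:ℝ) 1, ContinuousAt f s := fun s hs => (hd1 s hs).continuousAt
  have f'cont : ∀ s ∈ Ioo (0:ℝ) 1, ContinuousAt f' s := fun s hs => (hd2 s hs).continuousAt
  -- P = (1-s) f s is strictly increasing on (0,1)
  have Pderiv : ∀ s ∈ Ioo (0:ℝ) 1, HasDerivAt (fun u => (1 - u) * f u)
      ((1 - s) * f' s - f s) s := by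
    intro s hs
    have h1 : HasDerivAt (fun u : ℝ => 1 - u) (-1) s := (hasDerivAt_id s).const_sub 1
    have := h1.mul (hd1 s hs)
    refine this.congr_deriv ?_
    ring
  have Pmono : ∀ a ∈ Ioo (0:ℝ) 1, ∀ b ∈ Ioo (0:ℝ) 1, a < b →
      (1 - a) * f a < (1 - b) * f b := by
    intro a ha b hb hab
    have hIcc : Icc a b ⊆ Ioo (0:ℝ) 1 := fun x hx => ⟨lt_of_lt_of_le ha.1 hx.1, lt_of_le_of_lt hx.2 hb.2⟩
    have := strictMonoOn_of_deriv_pos (convex_Icc a b)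
      (fun x hx => ((Pderiv x (hIcc hx)).continuousAt).continuousWithinAt)
      (fun x hx => by
        rw [interior_Icc] at hx
        rw [(Pderiv x (hIcc (Ioo_subset_Icc_self hx))).deriv]
        exact hf3 x (hIcc (Ioo_subset_Icc_self hx)))
    exact this (left_mem_Icc.mpr hab.le) (right_mem_Icc.mpr hab.le) hab
  -- h s := f' s / ((1-s) f s ^ 3) is strictly decreasing
  have hid : ∀ s ∈ Ioo (0:ℝ) 1, f' s / ((1 - s) * f s ^ 3)
      = ((1 - s) * f' s / f s) / ((1 - s) * f s) ^ 2 := by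
    intro s hs
    have h1 := fne s hs
    have h2 := one_sub_ne s hs
    field_simp
  have Numpos : ∀ s ∈ Ioo (0:ℝ) 1, 0 < (1 - s) * f' s / f s := by
    intro s hs
    have h1 := hf3 s hs
    have h2 := fpos s hs
    exact div_pos (by linarith) h2
  have hanti : ∀ a ∈ Ioo (0:ℝ) 1, ∀ b ∈ Ioo (0:ℝ) 1, a < b →
      f' b / ((1 - b) * f b ^ 3) < f' a / ((1 - a) * f a ^ 3) := by
    intro a ha b hb hab
    have hIcc : Icc a b ⊆ Ioo (0:ℝ) 1 := fun x hx => ⟨lt_of_lt_of_le ha.1 hx.1, lt_of_le_of_lt hx.2 hb.2⟩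
    have hNumanti : StrictAntiOn (fun t => (1 - t) * f' t / f t) (Icc a b) := by
      apply strictAntiOn_of_deriv_neg (convex_Icc a b)
      · intro x hx
        have hx' := hIcc hx
        exact (ContinuousAt.div (((continuous_const.sub continuous_id).continuousAt).mul
          (f'cont x hx')) (fcont x hx') (fne x hx')).continuousWithinAt
      · intro x hx
        rw [interior_Icc] at hx
        exact hf4 x (hIcc (Ioo_subset_Icc_self hx))
    have hN := hNumanti (left_mem_Icc.mpr hab.le) (right_mem_Icc.mpr hab.le) hab
    have hD := Pmono a ha b hb hab
    have hDa : 0 < (1 - a) * f a := mul_pos (by have := ha.2; linarith) (fpos a ha)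
    have hNb : 0 < (1 - b) * f' b / f b := Numpos b hb
    rw [hid a ha, hid b hb]
    rw [div_lt_div_iff₀ (pow_pos (hDa.trans hD) 2) (pow_pos hDa 2)]
    have hsq : ((1 - a) * f a) ^ 2 < ((1 - b) * f b) ^ 2 := by nlinarith
    nlinarith
  -- the ODE right-hand side g and the potential Φ
  set g : ℝ → ℝ := fun s => (1 - s) / 4 * ((2 * α) ^ 2 * f' s / ((1 - s) * f s ^ 3) - 1)
    with hg_def
  set Φ : ℝ → ℝ := fun s => ((1 - s) ^ 2 - (2 * α) ^ 2 / f s ^ 2) / 4 with hΦ_def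
  have hg_eval : ∀ s, g s = (1 - s) / 4 * ((2 * α) ^ 2 * f' s / ((1 - s) * f s ^ 3) - 1) :=
    fun s => rfl
  have hΦ_eval : ∀ s, Φ s = ((1 - s) ^ 2 - (2 * α) ^ 2 / f s ^ 2) / 4 := fun s => rfl
  have h2α2 : (0:ℝ) < (2 * α) ^ 2 := by positivity
  -- sign of g
  have gpos : ∀ s ∈ Ioo (0:ℝ) 1, s < z → 0 < g s := by
    intro s hs hsz
    rw [hg_eval]
    have h1 : f' z / ((1 - z) * f z ^ 3) < f' s / ((1 - s) * f s ^ 3) := hanti s hs z hz hsz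
    rw [hzdef] at h1
    have h2 : (1:ℝ) < (2 * α) ^ 2 * (f' s / ((1 - s) * f s ^ 3)) := by
      have h2' := (mul_lt_mul_iff_right₀ h2α2).mpr h1
      rwa [mul_one_div, div_self (ne_of_gt h2α2)] at h2'
    rw [mul_div_assoc]
    have h3 : (0:ℝ) < 1 - s := by have := hs.2; linarith
    have h4 : 0 < (2 * α) ^ 2 * (f' s / ((1 - s) * f s ^ 3)) - 1 := by linarith
    positivity
  have gneg : ∀ s ∈ Ioo (0:ℝ) 1, z < s → g s < 0 := by
    intro s hs hzs
    rw [hg_eval]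
    have h1 : f' s / ((1 - s) * f s ^ 3) < f' z / ((1 - z) * f z ^ 3) := hanti z hz s hs hzs
    rw [hzdef] at h1
    have h2 : (2 * α) ^ 2 * (f' s / ((1 - s) * f s ^ 3)) < 1 := by
      have h2' := (mul_lt_mul_iff_right₀ h2α2).mpr h1
      rwa [mul_one_div, div_self (ne_of_gt h2α2)] at h2'
    rw [mul_div_assoc]
    have h3 : (0:ℝ) < 1 - s := by have := hs.2; linarith
    have h4 : (2 * α) ^ 2 * (f' s / ((1 - s) * f s ^ 3)) - 1 < 0 := by linarith
    have h5 : 0 < (1 - s) / 4 := by linarith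
    nlinarith
  -- derivative of Φ
  have hΦd : ∀ s ∈ Ioo (0:ℝ) 1, HasDerivAt Φ (2 * g s) s := by
    intro s hs
    have hfe := fne s hs
    have h1e := one_sub_ne s hs
    have h1 : HasDerivAt (fun u : ℝ => (1 - u) ^ 2) (2 * (1 - s) ^ 1 * -1) s :=
      ((hasDerivAt_id s).const_sub 1).pow 2
    have h2 : HasDerivAt (fun u : ℝ => f u ^ 2) (2 * f s ^ 1 * f' s) s := (hd1 s hs).pow 2
    have h3 : HasDerivAt (fun u : ℝ => (2 * α) ^ 2 / f u ^ 2)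
        ((0 * f s ^ 2 - (2 * α) ^ 2 * (2 * f s ^ 1 * f' s)) / (f s ^ 2) ^ 2) s :=
      (hasDerivAt_const s ((2 * α) ^ 2)).div h2 (pow_ne_zero 2 hfe)
    have h4 := (h1.sub h3).div_const 4
    refine h4.congr_deriv ?_
    rw [hg_eval]
    field_simp
    ring
  have Φcont : ∀ s ∈ Ioo (0:ℝ) 1, ContinuousAt Φ s := fun s hs => (hΦd s hs).continuousAt
  -- monotonicity of Φ
  have Φmono : ∀ a b : ℝ, 0 < a → a < b → b ≤ z → Φ a < Φ b := by
    intro a b ha hab hbz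
    have hIcc : Icc a b ⊆ Ioo (0:ℝ) 1 := fun x hx =>
      ⟨lt_of_lt_of_le ha hx.1, lt_of_le_of_lt (hx.2.trans hbz) hz1⟩
    have := strictMonoOn_of_deriv_pos (convex_Icc a b)
      (fun x hx => (Φcont x (hIcc hx)).continuousWithinAt)
      (fun x hx => by
        rw [interior_Icc] at hx
        rw [(hΦd x (hIcc (Ioo_subset_Icc_self hx))).deriv]
        have : x < z := lt_of_lt_of_le hx.2 hbz
        have := gpos x (hIcc (Ioo_subset_Icc_self hx)) this
        linarith)
    exact this (left_mem_Icc.mpr hab.le) (right_mem_Icc.mpr hab.le) hab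
  have Φanti : ∀ a b : ℝ, z ≤ a → a < b → b < 1 → Φ b < Φ a := by
    intro a b hza hab hb1
    have hIcc : Icc a b ⊆ Ioo (0:ℝ) 1 := fun x hx =>
      ⟨lt_of_lt_of_le (lt_of_lt_of_le hz0 hza) hx.1, lt_of_le_of_lt hx.2 hb1⟩
    have := strictAntiOn_of_deriv_neg (convex_Icc a b)
      (fun x hx => (Φcont x (hIcc hx)).continuousWithinAt)
      (fun x hx => by
        rw [interior_Icc] at hx
        rw [(hΦd x (hIcc (Ioo_subset_Icc_self hx))).deriv]
        have : z < x := lt_of_le_of_lt hza hx.1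
        have := gneg x (hIcc (Ioo_subset_Icc_self hx)) this
        linarith)
    exact this (left_mem_Icc.mpr hab.le) (right_mem_Icc.mpr hab.le) hab
  -- Φ m > 0
  have fm_pos : 0 < f m := fpos m ⟨hm0, hm1⟩
  have ΦmPos : 0 < Φ m := by
    rw [hΦ_eval]
    have h1 : (2 * α) ^ 2 < ((1 - m) * f m) ^ 2 := by nlinarith
    have h2 : (2 * α) ^ 2 / f m ^ 2 < (1 - m) ^ 2 := by
      rw [div_lt_iff₀ (by positivity)]
      nlinarith
    linarith
  -- Φ tends to 0 at 1⁻
  have Φtend : Tendsto Φ (nhdsWithin 1 (Iio 1)) (nhds 0) := by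
    have hmem : Ioo z 1 ∈ nhdsWithin (1:ℝ) (Iio 1) :=
      Ioo_mem_nhdsLT_of_mem (by constructor <;> [exact hz1; exact le_refl 1])
    have hEq : ∀ s ∈ Ioo z 1, ((1 - s) ^ 2 * (1 - (2 * α) ^ 2 / ((1 - s) * f s) ^ 2)) / 4 = Φ s := by
      intro s hs
      have hs' : s ∈ Ioo (0:ℝ) 1 := ⟨hz0.trans hs.1, hs.2⟩
      have h1 := fne s hs'
      have h2 := one_sub_ne s hs'
      rw [hΦ_eval]
      field_simp
    have T1 : Tendsto (fun s : ℝ => (1 - s) ^ 2) (nhdsWithin 1 (Iio 1)) (nhds 0) := by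
      have : Tendsto (fun s : ℝ => (1 - s) ^ 2) (nhds 1) (nhds ((1 - 1) ^ 2)) :=
        ((continuous_const.sub continuous_id).pow 2).continuousAt
      simpa using this.mono_left nhdsWithin_le_nhds
    have T2 : Tendsto (fun s : ℝ => 1 - (2 * α) ^ 2 / ((1 - s) * f s) ^ 2)
        (nhdsWithin 1 (Iio 1)) (nhds (1 - (2 * α) ^ 2 / σc ^ 2)) :=
      tendsto_const_nhds.sub ((tendsto_const_nhds.div (hf2.pow 2) (by positivity)))
    have T3 := ((T1.mul T2).div_const 4)
    rw [show (0:ℝ) * (1 - (2 * α) ^ 2 / σc ^ 2) / 4 = 0 by ring] at T3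
    exact T3.congr' (eventually_of_mem hmem hEq)
  -- construct M
  have hev : ∀ᶠ s in nhdsWithin (1:ℝ) (Iio 1), Φ s < Φ m := Φtend.eventually_lt_const ΦmPos
  have hmem : Ioo z 1 ∈ nhdsWithin (1:ℝ) (Iio 1) :=
    Ioo_mem_nhdsLT_of_mem (by constructor <;> [exact hz1; exact le_refl 1])
  obtain ⟨s₁, hs₁Φ, hs₁mem⟩ := (hev.and (eventually_of_mem hmem (fun x hx => hx))).exists
  have hzs₁ : z < s₁ := hs₁mem.1
  have hs₁1 : s₁ < 1 := hs₁mem.2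
  have hΦzm : Φ m < Φ z := Φmono m z hm0 hmz (le_refl z)
  have hΦcontIcc : ContinuousOn Φ (Icc z s₁) := fun x hx =>
    (Φcont x ⟨lt_of_lt_of_le hz0 hx.1, lt_of_le_of_lt hx.2 hs₁1⟩).continuousWithinAt
  obtain ⟨M, hMmem, hΦM⟩ := intermediate_value_Icc' hzs₁.le hΦcontIcc
    ⟨hs₁Φ.le, hΦzm.le⟩
  have hMz : z < M := by
    rcases eq_or_lt_of_le hMmem.1 with h | h
    · exfalso; rw [← h] at hΦM; linarith
    · exact h
  have hM1 : M < 1 := lt_of_le_of_lt hMmem.2 hs₁1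
  have hmM : m < M := hmz.trans hMz
  have hsubIoo : Icc m M ⊆ Ioo (0:ℝ) 1 := fun x hx =>
    ⟨lt_of_lt_of_le hm0 hx.1, lt_of_le_of_lt hx.2 hM1⟩
  have hout : ∀ s ∈ Ioo (0:ℝ) 1, Φ m ≤ Φ s → s ∈ Icc m M := by
    intro s hs hΦs
    by_contra hnot
    rcases not_and_or.mp (fun hc : m ≤ s ∧ s ≤ M => hnot ⟨hc.1, hc.2⟩) with h | h
    · have : Φ s < Φ m := Φmono s m hs.1 (not_le.mp h) hmz.le
      linarith
    · have : Φ s < Φ M := Φanti M s hMz.le (not_le.mp h) hs.2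
      rw [hΦM] at this
      linarith
  -- y' solves the autonomous equation while y is in (0,1)
  have hgy : ∀ t : ℝ, y t ∈ Ioo (0:ℝ) 1 → HasDerivAt y' (g (y t)) t := by
    intro t ht
    have h := hy' t
    rw [if_pos ht.2] at h
    exact h
  have forward := inv_abs g Φ m M hm0 hmM.le hM1 hΦd hout y y' hy hgy hy0 hy'0
  have hneg : ∀ t : ℝ, HasDerivAt (fun τ : ℝ => -τ) (-1) t := fun t => (hasDerivAt_id t).neg
  have hu : ∀ t : ℝ, HasDerivAt (fun τ => y (-τ)) (-y' (-t)) t := by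
    intro t
    have h2 := HasDerivAt.comp t (hy (-t)) (hneg t)
    simpa [Function.comp_def, mul_neg_one] using h2
  have hu' : ∀ t : ℝ, (fun τ => y (-τ)) t ∈ Ioo (0:ℝ) 1 →
      HasDerivAt (fun τ => -y' (-τ)) (g ((fun τ => y (-τ)) t)) t := by
    intro t ht
    have h2 := (HasDerivAt.comp t (hgy (-t) ht) (hneg t)).neg
    simpa [Function.comp_def, mul_neg_one, Pi.neg_def] using h2
  have backward := inv_abs g Φ m M hm0 hmM.le hM1 hΦd hout (fun τ => y (-τ))
    (fun τ => -y' (-τ)) hu hu' (by simpa using hy0) (by simpa using hy'0)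
  have hbox : ∀ t : ℝ, y t ∈ Icc m M := by
    intro t
    rcases le_or_gt 0 t with h | h
    · exact forward t h
    · have := backward (-t) (by linarith)
      simpa using this
  have hgy' : ∀ t : ℝ, HasDerivAt y' (g (y t)) t := fun t => hgy t (hsubIoo (hbox t))
  have y'cont : Continuous y' := continuous_iff_continuousAt.mpr fun t => (hgy' t).continuousAt
  have ycont : Continuous y := continuous_iff_continuousAt.mpr fun t => (hy t).continuousAt
  have hEd : ∀ t : ℝ, HasDerivAt (fun τ => y' τ ^ 2 - Φ (y τ)) 0 t := by
    intro t
    have h1 : HasDerivAt (fun τ => y' τ ^ 2) (2 * y' t ^ 1 * g (y t)) t := (hgy' t).pow 2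
    have h2 : HasDerivAt (fun τ => Φ (y τ)) (2 * g (y t) * y' t) t :=
      (hΦd (y t) (hsubIoo (hbox t))).comp t (hy t)
    have h3 := h1.sub h2
    refine h3.congr_deriv ?_
    ring
  have energy : ∀ t : ℝ, y' t ^ 2 = Φ (y t) - Φ m := by
    intro t
    have h1 := is_const_of_deriv_eq_zero (f := fun τ => y' τ ^ 2 - Φ (y τ))
      (fun τ => (hEd τ).differentiableAt) (fun τ => (hEd τ).deriv) t 0
    simp only [hy0, hy'0] at h1
    norm_num at h1
    linarith
  -- initial push: y' > 0 just after 0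
  have hgm : 0 < g m := gpos m ⟨hm0, hm1⟩ hmz
  have h0d : HasDerivAt y' (g m) 0 := by have h := hgy' 0; rwa [hy0] at h
  have hslope := hasDerivAt_iff_tendsto_slope.mp h0d
  have hev0 : ∀ᶠ t in nhdsWithin (0:ℝ) {(0:ℝ)}ᶜ, 0 < slope y' 0 t :=
    hslope.eventually_const_lt hgm
  have hmonof : nhdsWithin (0:ℝ) (Ioi 0) ≤ nhdsWithin (0:ℝ) {(0:ℝ)}ᶜ :=
    nhdsWithin_mono 0 (fun x hx => ne_of_gt hx)
  have hev1 : ∀ᶠ t in nhdsWithin (0:ℝ) (Ioi 0), 0 < y' t := by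
    filter_upwards [hev0.filter_mono hmonof, self_mem_nhdsWithin] with t h1 h2
    rw [slope_def_field, hy'0, sub_zero, sub_zero] at h1
    have h3 := mul_pos h1 (show (0:ℝ) < t from h2)
    rwa [div_mul_cancel₀ _ (ne_of_gt (show (0:ℝ) < t from h2))] at h3
  obtain ⟨ε, hε, hsubε⟩ := mem_nhdsGT_iff_exists_Ioo_subset.mp hev1
  have hε0 : 0 < ε := hε
  have hpos : ∀ t, 0 < t → t < ε → 0 < y' t := fun t h1 h2 => hsubε ⟨h1, h2⟩
  -- y stays strictly below M wherever y' ≠ 0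
  have ylt : ∀ t : ℝ, y' t ≠ 0 → y t < M := by
    intro t hne'
    have h1 := energy t
    have h2 : 0 < y' t ^ 2 := by positivity
    have h3 : Φ m < Φ (y t) := by linarith
    rcases lt_or_eq_of_le (hbox t).2 with h | h
    · exact h
    · exfalso; rw [h, hΦM] at h3; linarith
  have monoOn : ∀ a b : ℝ, a < b → (∀ x, a < x → x < b → 0 < y' x) → y a < y b := by
    intro a b hab hpos'
    have h := strictMonoOn_of_deriv_pos (convex_Icc a b) ycont.continuousOn
      (fun x hx => by
        rw [interior_Icc] at hx
        rw [(hy x).deriv]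
        exact hpos' x hx.1 hx.2)
    exact h (left_mem_Icc.mpr hab.le) (right_mem_Icc.mpr hab.le) hab
  -- there is a positive zero of y'
  have hzero : ∃ t, 0 < t ∧ y' t = 0 := by
    by_contra hno
    push_neg at hno
    have sign : ∀ t, 0 < t → 0 < y' t := by
      intro t ht
      rcases lt_trichotomy (y' t) 0 with h | h | h
      · exfalso
        set a := min (ε/2) t with ha_def
        have ha0 : 0 < a := lt_min (by linarith) ht
        have haε : a ≤ ε/2 := min_le_left _ _
        have hay : 0 < y' a := hpos a ha0 (by linarith)
        have hat : a ≤ t := min_le_right _ _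
        have hat' : a < t := by
          rcases eq_or_lt_of_le hat with h' | h'
          · exfalso; rw [h'] at hay; linarith
          · exact h'
        obtain ⟨c, hcmem, hc⟩ := intermediate_value_Icc' hat'.le y'cont.continuousOn
          ⟨h.le, hay.le⟩
        exact hno c (lt_of_lt_of_le ha0 hcmem.1) hc
      · exact absurd h (hno t ht)
      · exact h
    have hmono2 : ∀ a b : ℝ, 0 ≤ a → a < b → y a < y b := fun a b ha hab =>
      monoOn a b hab (fun x hx _ => sign x (lt_of_le_of_lt ha hx))
    -- y eventually passes z
    have hstep : ∃ t₁, 0 < t₁ ∧ z < y t₁ := by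
      by_contra hnt
      push_neg at hnt
      have ht₀ : 0 < ε/2 := by linarith
      set c := y (ε/2) with hc_def
      have hcm : m < c := by rw [← hy0]; exact hmono2 0 (ε/2) le_rfl ht₀
      have hcz : c ≤ z := hnt (ε/2) ht₀
      have hΦc : Φ m < Φ c := Φmono m c hm0 hcm hcz
      set k := Real.sqrt (Φ c - Φ m) with hk_def
      have hk0 : 0 < k := Real.sqrt_pos.mpr (by linarith)
      have hk2 : k ^ 2 = Φ c - Φ m := Real.sq_sqrt (by linarith)
      have hlow : ∀ t, ε/2 ≤ t → k ≤ y' t := by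
        intro t htt
        have h1 : c ≤ y t := by
          rcases eq_or_lt_of_le htt with h' | h'
          · rw [hc_def, h']
          · exact (hmono2 (ε/2) t ht₀.le h').le
        have h2 : Φ c ≤ Φ (y t) := by
          rcases eq_or_lt_of_le h1 with h' | h'
          · rw [← h']
          · exact (Φmono c (y t) (lt_trans hm0 hcm) h'
              (hnt t (lt_of_lt_of_le ht₀ htt))).le
        have h3 := energy t
        have h4 : k ^ 2 ≤ y' t ^ 2 := by rw [hk2]; linarith
        have h5 := sign t (lt_of_lt_of_le ht₀ htt)
        nlinarith
      set T := ε/2 + (z - c)/k + 1 with hT_def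
      have hTpos : ε/2 < T := by
        have h2 : 0 ≤ (z - c)/k := div_nonneg (by linarith) hk0.le
        rw [hT_def]; linarith
      have hmono3 : MonotoneOn (fun t => y t - k * t) (Icc (ε/2) T) := by
        apply monotoneOn_of_deriv_nonneg (convex_Icc _ _)
        · exact (ycont.sub (continuous_const.mul continuous_id)).continuousOn
        · intro x hx
          have hk' : HasDerivAt (fun u : ℝ => k * u) k x := by
            simpa using (hasDerivAt_id x).const_mul k
          exact ((hy x).sub hk').differentiableAt.differentiableWithinAt
        · intro x hx
          rw [interior_Icc] at hx
          have hk' : HasDerivAt (fun u : ℝ => k * u) k x := by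
            simpa using (hasDerivAt_id x).const_mul k
          rw [(show HasDerivAt (fun t => y t - k * t) (y' x - k) x from (hy x).sub hk').deriv]
          have := hlow x hx.1.le
          linarith
      have h6 := hmono3 (left_mem_Icc.mpr hTpos.le) (right_mem_Icc.mpr hTpos.le) hTpos.le
      have hkT : k * (T - ε/2) = (z - c) + k := by
        rw [hT_def]
        field_simp
        ring
      have hyT : z < y T := by nlinarith
      exact absurd (hnt T (lt_trans ht₀ hTpos)) (not_le.mpr hyT)
    obtain ⟨t₁, ht₁0, ht₁z⟩ := hstep
    set c' := y t₁ with hc'_def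
    have hc'M : c' < M := ylt t₁ (ne_of_gt (sign t₁ ht₁0))
    have hc'sub : Icc c' M ⊆ Ioo (0:ℝ) 1 := fun x hx =>
      ⟨lt_trans hz0 (lt_of_lt_of_le ht₁z hx.1), lt_of_le_of_lt hx.2 hM1⟩
    have hgcont : ContinuousOn g (Icc c' M) := by
      intro x hx
      have hx' := hc'sub hx
      apply ContinuousAt.continuousWithinAt
      have hca : ContinuousAt (fun s => (1 - s) / 4 *
          ((2 * α) ^ 2 * f' s / ((1 - s) * f s ^ 3) - 1)) x := by
        apply ContinuousAt.mul
        · exact ((continuous_const.sub continuous_id).div_const 4).continuousAt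
        · apply ContinuousAt.sub _ continuousAt_const
          apply ContinuousAt.div
          · exact continuousAt_const.mul (f'cont x hx')
          · exact ((continuous_const.sub continuous_id).continuousAt).mul ((fcont x hx').pow 3)
          · exact mul_ne_zero (one_sub_ne x hx') (pow_ne_zero 3 (fne x hx'))
      exact hca
    obtain ⟨s₀, hs₀mem, hs₀max⟩ := isCompact_Icc.exists_isMaxOn (nonempty_Icc.mpr hc'M.le) hgcont
    have hgs₀ : g s₀ < 0 := gneg s₀ (hc'sub hs₀mem) (lt_of_lt_of_le ht₁z hs₀mem.1)
    set k' := -g s₀ with hk'_def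
    have hk'0 : 0 < k' := by rw [hk'_def]; linarith
    have hbound : ∀ t, t₁ ≤ t → g (y t) ≤ -k' := by
      intro t htt
      have h1 : c' ≤ y t := by
        rcases eq_or_lt_of_le htt with h' | h'
        · rw [hc'_def, h']
        · exact (hmono2 t₁ t ht₁0.le h').le
      have h2 : y t ∈ Icc c' M := ⟨h1, (hbox t).2⟩
      have h3 := hs₀max h2
      rw [hk'_def]
      simpa using h3
    set T' := t₁ + y' t₁ / k' + 1 with hT'_def
    have hT'1 : t₁ < T' := by
      have h2 : 0 ≤ y' t₁ / k' := div_nonneg (sign t₁ ht₁0).le hk'0.le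
      rw [hT'_def]; linarith
    have hant : AntitoneOn (fun t => y' t + k' * t) (Icc t₁ T') := by
      apply antitoneOn_of_deriv_nonpos (convex_Icc _ _)
      · exact (y'cont.add (continuous_const.mul continuous_id)).continuousOn
      · intro x hx
        have hk' : HasDerivAt (fun u : ℝ => k' * u) k' x := by
          simpa using (hasDerivAt_id x).const_mul k'
        exact ((hgy' x).add hk').differentiableAt.differentiableWithinAt
      · intro x hx
        rw [interior_Icc] at hx
        have hk2 : HasDerivAt (fun u : ℝ => k' * u) k' x := by
          simpa using (hasDerivAt_id x).const_mul k'
        rw [(show HasDerivAt (fun t => y' t + k' * t) (g (y x) + k') x from (hgy' x).add hk2).deriv]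
        have := hbound x hx.1.le
        linarith
    have h6 := hant (left_mem_Icc.mpr hT'1.le) (right_mem_Icc.mpr hT'1.le) hT'1.le
    have h6' : y' T' + k' * T' ≤ y' t₁ + k' * t₁ := h6
    have h8 : k' * (T' - t₁) = y' t₁ + k' := by
      rw [hT'_def]
      field_simp
      ring
    have h9 := sign T' (lt_trans ht₁0 hT'1)
    nlinarith [h6', h8, h9]
  obtain ⟨tz, htz0, htzval⟩ := hzero
  -- least positive zero t₂ of y'
  set B2 : Set ℝ := Ici ε ∩ y' ⁻¹' {0} with hB2_def
  have htzε : ε ≤ tz := by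
    by_contra hlt
    push_neg at hlt
    exact absurd htzval (ne_of_gt (hpos tz htz0 hlt))
  have hB2ne : B2.Nonempty := ⟨tz, htzε, htzval⟩
  have hB2closed : IsClosed B2 := isClosed_Ici.inter (isClosed_singleton.preimage y'cont)
  have hB2bdd : BddBelow B2 := ⟨ε, fun x hx => hx.1⟩
  set t₂ := sInf B2 with ht₂_def
  have ht₂mem := hB2closed.csInf_mem hB2ne hB2bdd
  have ht₂ε : ε ≤ t₂ := ht₂mem.1
  have ht₂0 : 0 < t₂ := lt_of_lt_of_le hε0 ht₂ε
  have ht₂val : y' t₂ = 0 := ht₂mem.2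
  have hposint : ∀ t, 0 < t → t < t₂ → 0 < y' t := by
    intro t h1 h2
    rcases lt_or_ge t ε with h | h
    · exact hpos t h1 h
    · rcases lt_trichotomy (y' t) 0 with hlt | heq | hgt
      · exfalso
        have ha0 : 0 < ε/2 := by linarith
        have hay : 0 < y' (ε/2) := hpos _ ha0 (by linarith)
        obtain ⟨c, hcmem, hc⟩ := intermediate_value_Icc' (show ε/2 ≤ t by linarith)
          y'cont.continuousOn ⟨hlt.le, hay.le⟩
        have hcε : ε ≤ c := by
          by_contra hlt2
          push_neg at hlt2
          exact absurd hc (ne_of_gt (hpos c (lt_of_lt_of_le ha0 hcmem.1) hlt2))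
        have : t₂ ≤ c := csInf_le hB2bdd ⟨hcε, hc⟩
        linarith [hcmem.2]
      · exact absurd (csInf_le hB2bdd (⟨h, heq⟩ : t ∈ B2)) (not_le.mpr h2)
      · exact hgt
  have ymonot₂ : StrictMonoOn y (Icc 0 t₂) := strictMonoOn_of_deriv_pos (convex_Icc _ _)
    ycont.continuousOn (fun x hx => by
      rw [interior_Icc] at hx
      rw [(hy x).deriv]
      exact hposint x hx.1 hx.2)
  have hyt₂M : y t₂ = M := by
    have h1 : m < y t₂ := by
      rw [← hy0]
      exact ymonot₂ (left_mem_Icc.mpr ht₂0.le) (right_mem_Icc.mpr ht₂0.le) ht₂0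
    have h2 : y t₂ ≤ M := (hbox t₂).2
    have h3 : Φ (y t₂) = Φ m := by
      have h4 := energy t₂
      rw [ht₂val] at h4
      nlinarith
    by_contra hne2
    have h4 : y t₂ < M := lt_of_le_of_ne h2 hne2
    rcases le_or_gt (y t₂) z with h5 | h5
    · have := Φmono m (y t₂) hm0 h1 h5; linarith
    · have := Φanti (y t₂) M h5.le h4 hM1; rw [hΦM] at this; linarith
  -- g is C¹ on (0,1); Lipschitz bound on [m, M]
  have hgderiv : ∀ s ∈ Ioo (0:ℝ) 1, HasDerivAt g
      ((2 * α) ^ 2 * ((f'' s * f s - 3 * f' s ^ 2) / (4 * f s ^ 4)) + 1/4) s := by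
    intro s hs
    have hfe := fne s hs
    have hEqn : (fun u => (2 * α) ^ 2 / 4 * (f' u / f u ^ 3) - (1 - u)/4) =ᶠ[nhds s] g := by
      filter_upwards [isOpen_Ioo.mem_nhds hs] with u hu
      rw [hg_eval]
      have h1 := fne u hu
      have h2 := one_sub_ne u hu
      field_simp
    have h1 : HasDerivAt (fun u => f' u / f u ^ 3)
        ((f'' s * f s ^ 3 - f' s * (3 * f s ^ 2 * f' s)) / (f s ^ 3) ^ 2) s := by
      have h := (hd2 s hs).div ((hd1 s hs).pow 3) (pow_ne_zero 3 hfe)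
      refine h.congr_deriv ?_
      simp only [Pi.pow_apply]
      norm_num
    have h2 := (h1.const_mul ((2 * α) ^ 2 / 4)).sub (((hasDerivAt_id s).const_sub 1).div_const 4)
    have h4 : HasDerivAt (fun u => (2 * α) ^ 2 / 4 * (f' u / f u ^ 3) - (1 - u)/4)
        ((2 * α) ^ 2 * ((f'' s * f s - 3 * f' s ^ 2) / (4 * f s ^ 4)) + 1/4) s := by
      refine h2.congr_deriv ?_
      field_simp
      ring
    exact hEqn.hasDerivAt_iff.mp h4
  have fcontOn : ContinuousOn f (Icc m M) := fun x hx => (fcont x (hsubIoo hx)).continuousWithinAt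
  have f'contOn : ContinuousOn f' (Icc m M) := fun x hx => (f'cont x (hsubIoo hx)).continuousWithinAt
  have γcont : ContinuousOn (fun s => (2 * α) ^ 2 * ((f'' s * f s - 3 * f' s ^ 2) / (4 * f s ^ 4)) + 1/4)
      (Icc m M) := by
    apply ContinuousOn.add _ continuousOn_const
    apply ContinuousOn.mul continuousOn_const
    apply ContinuousOn.div
    · exact ((hc2.mono hsubIoo).mul fcontOn).sub (continuousOn_const.mul (f'contOn.pow 2))
    · exact continuousOn_const.mul (fcontOn.pow 4)
    · intro x hx
      exact mul_ne_zero (by norm_num) (pow_ne_zero 4 (fne x (hsubIoo hx)))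
  obtain ⟨C, hC⟩ := isCompact_Icc.exists_bound_of_continuousOn γcont
  have hlip : LipschitzOnWith (Real.toNNReal C) g (Icc m M) := by
    apply (convex_Icc m M).lipschitzOnWith_of_nnnorm_hasDerivWithin_le
      (f' := fun s => (2 * α) ^ 2 * ((f'' s * f s - 3 * f' s ^ 2) / (4 * f s ^ 4)) + 1/4)
      (fun x hx => (hgderiv x (hsubIoo hx)).hasDerivWithinAt)
    intro x hx
    rw [← NNReal.coe_le_coe, coe_nnnorm, Real.coe_toNNReal']
    exact le_max_of_le_left (hC x hx)
  have huq := uniq_abs g (Real.toNNReal C) (Icc m M) hlip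
  -- evenness of y
  have heven : ∀ t : ℝ, y t = y (-t) := by
    apply huq y (fun τ => y (-τ)) y' (fun τ => -y' (-τ)) hy hgy' hu
      (fun t => hu' t (hsubIoo (hbox (-t)))) hbox (fun t => hbox (-t)) 0
    · norm_num
    · simp [hy'0]
  -- reflection of y about t₂
  have hrefl : ∀ t : ℝ, y t = y (2 * t₂ - t) := by
    have hr : ∀ t : ℝ, HasDerivAt (fun τ : ℝ => 2 * t₂ - τ) (-1) t :=
      fun t => (hasDerivAt_id t).const_sub (2 * t₂)
    have hZ : ∀ t : ℝ, HasDerivAt (fun τ => y (2 * t₂ - τ)) (-y' (2 * t₂ - t)) t := by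
      intro t
      have h2 := HasDerivAt.comp t (hy (2 * t₂ - t)) (hr t)
      simpa [Function.comp_def, mul_neg_one] using h2
    have hZ' : ∀ t : ℝ, HasDerivAt (fun τ => -y' (2 * t₂ - τ)) (g (y (2 * t₂ - t))) t := by
      intro t
      have h2 := (HasDerivAt.comp t (hgy' (2 * t₂ - t)) (hr t)).neg
      simpa [Function.comp_def, mul_neg_one, Pi.neg_def] using h2
    have he2 : (2:ℝ) * t₂ - t₂ = t₂ := by ring
    apply huq y (fun τ => y (2 * t₂ - τ)) y' (fun τ => -y' (2 * t₂ - τ)) hy hgy' hZ hZ'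
      hbox (fun t => hbox (2 * t₂ - t)) t₂
    · rw [he2]
    · rw [he2, ht₂val]
      norm_num
  refine ⟨t₂, ht₂0, M, ⟨hMz, hM1⟩, ymonot₂, hyt₂M, fun t => (hbox t).2, ?_⟩
  intro t
  have h1 := hrefl (t + 2 * t₂)
  have h2 : 2 * t₂ - (t + 2 * t₂) = -t := by ring
  rw [h2] at h1
  rw [h1, ← heven t]
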